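/- Let K_s(x,t) = -t√(c(x²-t²)) J₁(√(c(x²-t²)))/(x²-t²) for a constant c > 0. Then T_s[1](x) := 1 + ∫₀ˣ K_s(x,t) dt = J₀(x√c), and consequently (d²/dx² + c) T_s[1](x) = √c J₁(x√c)/x ≠ 0 for small x > 0. -/

import Mathlib

open MeasureTheory

/-- The Bessel function of the first kind of order 0, defined by its power series. -/
noncomputable def besselJ0 (x : ℝ) : ℝ :=
  ∑' k : ℕ, (-1) ^ k * x ^ (2 * k) / (4 ^ k * (k.factorial : ℝ) ^ 2)

/-- The Bessel function of the first kind of order 1, defined by its power series. -/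
noncomputable def besselJ1 (x : ℝ) : ℝ :=
  ∑' k : ℕ, (-1) ^ k * x ^ (2 * k + 1) /
    (2 ^ (2 * k + 1) * (k.factorial : ℝ) * ((k + 1).factorial : ℝ))

open Filter FormalMultilinearSeries


lemma summable_coeff (aa : ℕ → ℝ) (h0 : ∀ n, aa n ≠ 0)
    (hr : Tendsto (fun n => ‖aa (n+1)‖ / ‖aa n‖) atTop (nhds 0)) (v : ℝ) :
    Summable (fun k => aa k * v ^ k) := by
  set p := FormalMultilinearSeries.ofScalars ℝ aa with hp
  have hrad : p.radius = ⊤ :=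
    ofScalars_radius_eq_top_of_tendsto ℝ aa (Eventually.of_forall h0) hr
  have h := p.hasFPowerSeriesOnBall (E := ℝ) (by rw [hrad]; exact ENNReal.zero_lt_top)
  have hs := h.hasSum (y := v) (by rw [hrad]; exact edist_lt_top _ _)
  have : (fun n => p n fun _ => v) = fun k => aa k * v ^ k := by
    funext n; rw [hp, ofScalars_apply_eq]; simp [smul_eq_mul]
  rw [this] at hs
  exact hs.summable


lemma hasDerivAt_tsum_coeff (aa : ℕ → ℝ) (h0 : ∀ n, aa n ≠ 0)
    (hr : Tendsto (fun n => ‖aa (n+1)‖ / ‖aa n‖) atTop (nhds 0)) (v : ℝ) :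
    HasDerivAt (fun w => ∑' k, aa k * w ^ k) (∑' k : ℕ, ((k:ℝ)+1) * aa (k+1) * v ^ k) v := by
  set p := FormalMultilinearSeries.ofScalars ℝ aa with hp
  have hrad : p.radius = ⊤ :=
    ofScalars_radius_eq_top_of_tendsto ℝ aa (Eventually.of_forall h0) hr
  have hsumeq : p.sum = fun w => ∑' k, aa k * w ^ k := by
    funext w
    rw [FormalMultilinearSeries.sum]
    exact tsum_congr fun n => by rw [hp, ofScalars_apply_eq]; simp [smul_eq_mul]
  have h : HasFPowerSeriesOnBall (fun w => ∑' k, aa k * w ^ k) p 0 ⊤ := by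
    rw [← hsumeq, ← hrad]
    exact p.hasFPowerSeriesOnBall (by rw [hrad]; exact ENNReal.zero_lt_top)
  have hdiff : DifferentiableAt ℝ (fun w => ∑' k, aa k * w ^ k) v := by
    have := (h.analyticAt_of_mem (y := v) (by exact edist_lt_top _ _)).differentiableAt
    simpa using this
  have hderiv : deriv (fun w => ∑' k, aa k * w ^ k) v = ∑' k : ℕ, ((k:ℝ)+1) * aa (k+1) * v ^ k := by
    have hd := h.fderiv
    have hs := hd.hasSum (y := v) (by exact edist_lt_top _ _)
    rw [zero_add] at hs
    have hs2 := (ContinuousLinearMap.apply ℝ ℝ v).hasSum hs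
    simp only [ContinuousLinearMap.apply_apply] at hs2
    have hterm : ∀ n, (p.derivSeries n fun _ => v) v = ((n:ℝ)+1) * aa (n+1) * v ^ (n+1) := by
      intro n
      rw [p.derivSeries_apply_diag, hp, ofScalars_apply_eq]
      push_cast
      simp [smul_eq_mul]; ring
    simp only [hterm] at hs2
    have hval : (fderiv ℝ (fun w => ∑' k, aa k * w ^ k) v) v
        = v * deriv (fun w => ∑' k, aa k * w ^ k) v := by
      rw [deriv]
      have := (fderiv ℝ (fun w => ∑' k, aa k * w ^ k) v).map_smul v (1:ℝ)
      simpa [smul_eq_mul] using this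
    rw [hval] at hs2
    rcases eq_or_ne v 0 with hv | hv
    · subst hv
      have hat : HasFPowerSeriesAt (fun w => ∑' k, aa k * w ^ k) p 0 := h.hasFPowerSeriesAt
      rw [hat.deriv, tsum_eq_single 0 (by intro k hk; simp [zero_pow hk])]
      simp [hp, FormalMultilinearSeries.coeff, FormalMultilinearSeries.ofScalars]
    · have hs3 := hs2.div_const v
      have : (fun n : ℕ => ((n:ℝ)+1) * aa (n+1) * v ^ (n+1) / v)
          = fun n : ℕ => ((n:ℝ)+1) * aa (n+1) * v ^ n := by
        funext n; rw [pow_succ]; field_simp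
      rw [this] at hs3
      rw [mul_comm, mul_div_assoc, div_self hv, mul_one] at hs3
      exact hs3.tsum_eq.symm
  rw [← hderiv]
  exact hdiff.hasDerivAt


noncomputable def aco (k : ℕ) : ℝ := (-1)^k / (4^k * (k.factorial : ℝ)^2)
noncomputable def bco (k : ℕ) : ℝ := (-1)^k / (2 * 4^k * (k.factorial : ℝ) * ((k+1).factorial : ℝ))

lemma aco_ne (k : ℕ) : aco k ≠ 0 := by
  unfold aco
  have h1 : ((k.factorial : ℝ)) ≠ 0 := Nat.cast_ne_zero.mpr k.factorial_ne_zero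
  positivity

lemma bco_ne (k : ℕ) : bco k ≠ 0 := by
  unfold bco
  have h1 : ((k.factorial : ℝ)) ≠ 0 := Nat.cast_ne_zero.mpr k.factorial_ne_zero
  have h2 : (((k+1).factorial : ℝ)) ≠ 0 := Nat.cast_ne_zero.mpr (k+1).factorial_ne_zero
  positivity

lemma abs_aco (k : ℕ) : |aco k| = 1 / (4^k * (k.factorial : ℝ)^2) := by
  unfold aco
  rw [abs_div, abs_pow, abs_neg, abs_one, one_pow, abs_of_pos (by positivity)]

lemma abs_bco (k : ℕ) : |bco k| = 1 / (2 * 4^k * (k.factorial : ℝ) * ((k+1).factorial : ℝ)) := by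
  unfold bco
  rw [abs_div, abs_pow, abs_neg, abs_one, one_pow, abs_of_pos (by positivity)]

lemma tendsto_of_ratio_le (f : ℕ → ℝ)
    (hb : ∀ n : ℕ, ‖f (n+1)‖ / ‖f n‖ ≤ 1 / ((n:ℝ)+1)) :
    Tendsto (fun n => ‖f (n+1)‖ / ‖f n‖) atTop (nhds 0) := by
  refine squeeze_zero (fun n => by positivity) hb ?_
  exact tendsto_one_div_add_atTop_nhds_zero_nat

lemma aco_ratio : Tendsto (fun n => ‖aco (n+1)‖ / ‖aco n‖) atTop (nhds 0) := by
  refine tendsto_of_ratio_le _ fun n => ?_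
  simp only [Real.norm_eq_abs]
  have hf : ((n.factorial : ℝ)) > 0 := by positivity
  have key : |aco (n+1)| / |aco n| = 1 / (4*((n:ℝ)+1)^2) := by
    rw [abs_aco, abs_aco, Nat.factorial_succ]
    push_cast
    field_simp
    ring
  rw [key, div_le_div_iff₀ (by positivity) (by positivity)]
  nlinarith [sq_nonneg ((n:ℝ)+1)]

lemma bco_ratio : Tendsto (fun n => ‖bco (n+1)‖ / ‖bco n‖) atTop (nhds 0) := by
  refine tendsto_of_ratio_le _ fun n => ?_
  simp only [Real.norm_eq_abs]
  have hf : ((n.factorial : ℝ)) > 0 := by positivity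
  have hf2 : (((n+1).factorial : ℝ)) > 0 := by positivity
  have key : |bco (n+1)| / |bco n| = 1 / (4*((n:ℝ)+1)*((n:ℝ)+2)) := by
    rw [abs_bco, abs_bco]
    rw [show n+1+1 = n+2 from rfl,
      show ((n+2).factorial : ℝ) = ((n:ℝ)+2) * ((n+1).factorial : ℝ) by
        rw [show n+2 = (n+1)+1 from rfl, Nat.factorial_succ]; push_cast; ring,
      show ((n+1).factorial : ℝ) = ((n:ℝ)+1) * (n.factorial : ℝ) by
        rw [Nat.factorial_succ]; push_cast; ring]
    field_simp
    ring
  rw [key, div_le_div_iff₀ (by positivity) (by positivity)]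
  nlinarith [sq_nonneg ((n:ℝ)+1)]

noncomputable def dco (k : ℕ) : ℝ := ((k:ℝ)+1) * bco (k+1)

lemma dco_ne (k : ℕ) : dco k ≠ 0 :=
  mul_ne_zero (by positivity) (bco_ne _)

lemma abs_dco (k : ℕ) : |dco k| = ((k:ℝ)+1) * |bco (k+1)| := by
  rw [dco, abs_mul, abs_of_pos (by positivity : (0:ℝ) < (k:ℝ)+1)]

lemma dco_ratio : Tendsto (fun n => ‖dco (n+1)‖ / ‖dco n‖) atTop (nhds 0) := by
  refine tendsto_of_ratio_le _ fun n => ?_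
  simp only [Real.norm_eq_abs]
  have hf : (((n+1).factorial : ℝ)) > 0 := by positivity
  have hf2 : (((n+2).factorial : ℝ)) > 0 := by positivity
  have key : |dco (n+1)| / |dco n| = 1 / (4*((n:ℝ)+1)*((n:ℝ)+3)) := by
    rw [abs_dco, abs_dco, abs_bco, abs_bco]
    rw [show n+1+1 = n+2 from rfl, show n+2+1 = n+3 from rfl,
      show ((n+3).factorial : ℝ) = ((n:ℝ)+3) * ((n+2).factorial : ℝ) by
        rw [show n+3 = (n+2)+1 from rfl, Nat.factorial_succ]; push_cast; ring,
      show ((n+2).factorial : ℝ) = ((n:ℝ)+2) * ((n+1).factorial : ℝ) by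
        rw [show n+2 = (n+1)+1 from rfl, Nat.factorial_succ]; push_cast; ring]
    push_cast
    field_simp
    ring
  rw [key, div_le_div_iff₀ (by positivity) (by positivity)]
  nlinarith [sq_nonneg ((n:ℝ)+1)]

noncomputable def Gf (v : ℝ) : ℝ := ∑' k : ℕ, aco k * v ^ k
noncomputable def Hf (v : ℝ) : ℝ := ∑' k : ℕ, bco k * v ^ k
noncomputable def Hd (v : ℝ) : ℝ := ∑' k : ℕ, dco k * v ^ k

lemma hasDerivAt_Gf (v : ℝ) : HasDerivAt Gf (-(1/2) * Hf v) v := by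
  have h := hasDerivAt_tsum_coeff aco aco_ne aco_ratio v
  have e : (∑' k : ℕ, ((k:ℝ)+1) * aco (k+1) * v ^ k) = -(1/2) * Hf v := by
    rw [Hf, ← tsum_mul_left]
    refine tsum_congr fun k => ?_
    have : ((k:ℝ)+1) * aco (k+1) = -(1/2) * bco k := by
      unfold aco bco
      rw [Nat.factorial_succ]
      push_cast
      have h1 : ((k.factorial : ℝ)) ≠ 0 := Nat.cast_ne_zero.mpr k.factorial_ne_zero
      have h2 : (((k+1).factorial : ℝ)) ≠ 0 := Nat.cast_ne_zero.mpr (k+1).factorial_ne_zero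
      field_simp
      ring
    rw [← mul_assoc, this, mul_assoc]
  rw [← e]
  exact h

lemma hasDerivAt_Hf (v : ℝ) : HasDerivAt Hf (Hd v) v := by
  have h := hasDerivAt_tsum_coeff bco bco_ne bco_ratio v
  have e : (∑' k : ℕ, ((k:ℝ)+1) * bco (k+1) * v ^ k) = ∑' k : ℕ, dco k * v ^ k :=
    tsum_congr fun k => by rw [dco]
  rw [Hd, ← e]
  exact h

lemma Gf_zero : Gf 0 = 1 := by
  rw [Gf, tsum_eq_single 0 (by intro k hk; simp [zero_pow hk])]
  simp [aco]

lemma Hf_zero : Hf 0 = 1/2 := by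
  rw [Hf, tsum_eq_single 0 (by intro k hk; simp [zero_pow hk])]
  simp [bco]

lemma besselJ0_eq (y : ℝ) : besselJ0 y = Gf (y^2) := by
  refine tsum_congr fun k => ?_
  rw [aco]
  rw [pow_mul]
  ring

lemma besselJ1_eq (y : ℝ) : besselJ1 y = y * Hf (y^2) := by
  rw [Hf, ← tsum_mul_left]
  refine tsum_congr fun k => ?_
  rw [bco, show y^(2*k+1) = (y^2)^k*y by rw [pow_succ, pow_mul],
    show (2:ℝ)^(2*k+1) = 4^k*2 by rw [pow_succ, pow_mul]; norm_num]
  ring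

lemma Gident (v : ℝ) : Gf v = 2 * Hf v + 2 * v * Hd v := by
  set q : ℕ → ℝ := fun j => 2 * (j:ℝ) * bco j * v ^ j with hq
  have hq1 : (fun k => q (k+1)) = fun k => (2*v) * (dco k * v ^ k) := by
    funext k
    simp only [hq, dco]
    push_cast
    ring
  have hsq1 : Summable fun k => q (k+1) := by
    rw [hq1]; exact (summable_coeff dco dco_ne dco_ratio v).mul_left _
  have hsq : Summable q := (summable_nat_add_iff 1).mp hsq1
  have hsb : Summable fun k => 2 * (bco k * v ^ k) :=
    (summable_coeff bco bco_ne bco_ratio v).mul_left _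
  have hterm : ∀ k : ℕ, aco k * v ^ k = 2 * (bco k * v ^ k) + q k := by
    intro k
    have : aco k = 2 * ((k:ℝ)+1) * bco k := by
      unfold aco bco
      rw [Nat.factorial_succ]
      have h1 : ((k.factorial : ℝ)) ≠ 0 := Nat.cast_ne_zero.mpr k.factorial_ne_zero
      have h2 : (((k+1).factorial : ℝ)) ≠ 0 := Nat.cast_ne_zero.mpr (k+1).factorial_ne_zero
      push_cast
      field_simp
    rw [this, hq]
    ring
  calc Gf v = ∑' k : ℕ, (2 * (bco k * v ^ k) + q k) := tsum_congr hterm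
    _ = (∑' k : ℕ, 2 * (bco k * v ^ k)) + ∑' k : ℕ, q k := Summable.tsum_add hsb hsq
    _ = 2 * Hf v + ∑' k : ℕ, q k := by rw [tsum_mul_left, Hf]
    _ = 2 * Hf v + (q 0 + ∑' k : ℕ, q (k+1)) := by rw [Summable.tsum_eq_zero_add hsq]
    _ = 2 * Hf v + 2 * v * Hd v := by
        have h0 : q 0 = 0 := by simp [hq]
        rw [h0, zero_add, hq1, tsum_mul_left, Hd]

/-- For the 'sine' transmutation kernel of `d²/dx² + c`, one has
`T_s[1](x) = J₀(x√c)` and hence `(d²/dx² + c) T_s[1](x) = √c J₁(x√c)/x ≠ 0`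
for small `x > 0`. -/
theorem stmt7 (c : ℝ) (hc : 0 < c)
    (Ks : ℝ → ℝ → ℝ)
    (hKs : ∀ x t, Ks x t
      = -(t * Real.sqrt (c * (x ^ 2 - t ^ 2)) *
          besselJ1 (Real.sqrt (c * (x ^ 2 - t ^ 2)))) / (x ^ 2 - t ^ 2))
    (Ts1 : ℝ → ℝ)
    (hTs1 : ∀ x, Ts1 x = 1 + ∫ t in (0:ℝ)..x, Ks x t) :
    (∀ x : ℝ, 0 ≤ x → Ts1 x = besselJ0 (x * Real.sqrt c)) ∧
    ∃ ε > (0:ℝ), ∀ x : ℝ, 0 < x → x < ε →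
      deriv (deriv Ts1) x + c * Ts1 x = Real.sqrt c * besselJ1 (x * Real.sqrt c) / x ∧
      Real.sqrt c * besselJ1 (x * Real.sqrt c) / x ≠ 0 := by
  have hsqc : Real.sqrt c * Real.sqrt c = c := Real.mul_self_sqrt hc.le
  have hJ0 : ∀ x : ℝ, besselJ0 (x * Real.sqrt c) = Gf (c * x^2) := fun x => by
    rw [besselJ0_eq, show (x*Real.sqrt c)^2 = c*x^2 by
      rw [mul_pow, Real.sq_sqrt hc.le]; ring]
  have hJ1 : ∀ x : ℝ, besselJ1 (x * Real.sqrt c) = x * Real.sqrt c * Hf (c * x^2) := fun x => by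
    rw [besselJ1_eq, show (x*Real.sqrt c)^2 = c*x^2 by
      rw [mul_pow, Real.sq_sqrt hc.le]; ring]
  have hHdiff : Differentiable ℝ Hf := fun v => (hasDerivAt_Hf v).differentiableAt
  have hHcont : Continuous Hf := hHdiff.continuous
  have part1 : ∀ x : ℝ, 0 ≤ x → Ts1 x = besselJ0 (x * Real.sqrt c) := by
    intro x hx
    rcases eq_or_lt_of_le hx with h0 | hxpos
    · rw [← h0, hTs1, intervalIntegral.integral_same, hJ0]
      rw [show c*(0:ℝ)^2 = 0 by ring, Gf_zero]
      norm_num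
    · set g : ℝ → ℝ := fun t => -(c*t) * Hf (c*(x^2 - t^2)) with hg
      have hcont2 : Continuous fun t : ℝ => c*(x^2 - t^2) := by continuity
      have hgc : Continuous g := ((continuous_const.mul continuous_id).neg).mul (hHcont.comp hcont2)
      have hF : ∀ t : ℝ, HasDerivAt (fun t => -Gf (c*(x^2 - t^2))) (g t) t := by
        intro t
        have h1 : HasDerivAt (fun t : ℝ => x^2 - t^2) (0 - 2*t) t := by
          exact ((hasDerivAt_const t (x^2)).sub (hasDerivAt_pow 2 t)).congr_deriv (by simp)
        have hu : HasDerivAt (fun t : ℝ => c*(x^2 - t^2)) (c*(0 - 2*t)) t := h1.const_mul c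
        have h2 := ((hasDerivAt_Gf (c*(x^2-t^2))).comp t hu).neg
        refine h2.congr_deriv ?_
        simp only [hg]
        ring
      have hne : ∀ᵐ t : ℝ, t ≠ x := by
        have hs : {t : ℝ | ¬ t ≠ x} = {x} := by ext t; simp
        rw [ae_iff, hs]
        exact measure_singleton x
      have hae : ∀ᵐ t : ℝ, t ∈ Set.uIoc 0 x → Ks x t = g t := by
        filter_upwards [hne] with t ht hmem
        rw [Set.uIoc_of_le hxpos.le] at hmem
        obtain ⟨ht0, htx⟩ := hmem
        have htlt : t < x := lt_of_le_of_ne htx ht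
        have hu : (0:ℝ) < x^2 - t^2 := by nlinarith
        have hcu : (0:ℝ) < c*(x^2 - t^2) := by positivity
        have hsq : Real.sqrt (c*(x^2-t^2)) * Real.sqrt (c*(x^2-t^2)) = c*(x^2-t^2) :=
          Real.mul_self_sqrt hcu.le
        rw [hKs, besselJ1_eq, Real.sq_sqrt hcu.le, hg]
        rw [div_eq_iff (ne_of_gt hu)]
        linear_combination (-(t * Hf (c*(x^2-t^2)))) * hsq
      have hint : (∫ t in (0:ℝ)..x, Ks x t) = ∫ t in (0:ℝ)..x, g t :=
        intervalIntegral.integral_congr_ae hae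
      have hFTC : (∫ t in (0:ℝ)..x, g t)
          = (fun t => -Gf (c*(x^2-t^2))) x - (fun t => -Gf (c*(x^2-t^2))) 0 :=
        intervalIntegral.integral_eq_sub_of_hasDerivAt (fun t _ => hF t)
          (hgc.intervalIntegrable 0 x)
      rw [hTs1, hint, hFTC, hJ0]
      simp only []
      rw [show c*(x^2 - x^2) = 0 by ring, show c*(x^2 - 0^2) = c*x^2 by ring, Gf_zero]
      ring
  refine ⟨part1, ?_⟩
  have hH0 : Hf 0 ≠ 0 := by rw [Hf_zero]; norm_num
  have hev0 := (hHcont.continuousAt (x := 0)).eventually_ne hH0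
  rw [Metric.eventually_nhds_iff] at hev0
  obtain ⟨δ, hδ, hball⟩ := hev0
  refine ⟨Real.sqrt (δ/c), Real.sqrt_pos.mpr (div_pos hδ hc), ?_⟩
  intro x hx hxe
  have hcx : c * x^2 < δ := by
    have h1 : x^2 < δ/c := (Real.lt_sqrt hx.le).mp hxe
    calc c*x^2 < c*(δ/c) := (mul_lt_mul_iff_right₀ hc).mpr h1
      _ = δ := by field_simp
  have hHne : Hf (c*x^2) ≠ 0 := by
    apply hball
    rw [Real.dist_eq, sub_zero, abs_of_nonneg (by positivity)]
    exact hcx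
  set f : ℝ → ℝ := fun y => Gf (c*y^2) with hf
  have hev : Ts1 =ᶠ[nhds x] f := by
    filter_upwards [Ioi_mem_nhds hx] with y hy
    rw [part1 y (le_of_lt hy), hJ0]
  have hf1 : ∀ y : ℝ, HasDerivAt f (-(c*y) * Hf (c*y^2)) y := fun y => by
    have hu : HasDerivAt (fun y : ℝ => c*y^2) (c*(2*y)) y := by
      simpa using (hasDerivAt_pow 2 y).const_mul c
    have h2 := (hasDerivAt_Gf (c*y^2)).comp y hu
    refine h2.congr_deriv ?_
    ring
  have hderivf : deriv f = fun y => -(c*y) * Hf (c*y^2) := funext fun y => (hf1 y).deriv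
  have hf2 : HasDerivAt (deriv f) (-c * Hf (c*x^2) + -(c*x) * (Hd (c*x^2) * (c*(2*x)))) x := by
    rw [hderivf]
    have h1 : HasDerivAt (fun y : ℝ => -(c*y)) (-c) x := by
      exact (((hasDerivAt_id x).const_mul c).neg).congr_deriv (by simp)
    have hu : HasDerivAt (fun y : ℝ => c*y^2) (c*(2*x)) x := by
      simpa using (hasDerivAt_pow 2 x).const_mul c
    have h2 : HasDerivAt (fun y : ℝ => Hf (c*y^2)) (Hd (c*x^2) * (c*(2*x))) x :=
      by have := (hasDerivAt_Hf (c*x^2)).comp x hu; exact this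
    exact h1.mul h2
  have hdd : deriv (deriv Ts1) x = deriv (deriv f) x := hev.deriv.deriv_eq
  have hTx : Ts1 x = f x := hev.eq_of_nhds
  constructor
  · rw [hdd, hf2.deriv, hTx, hJ1]
    simp only [hf]
    rw [Gident (c*x^2), eq_div_iff (ne_of_gt hx)]
    linear_combination (-(x * Hf (c*x^2))) * hsqc
  · rw [hJ1]
    have he : Real.sqrt c * (x * Real.sqrt c * Hf (c*x^2)) / x = c * Hf (c*x^2) := by
      rw [div_eq_iff (ne_of_gt hx)]
      linear_combination (x * Hf (c*x^2)) * hsqc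
    rw [he]
    exact mul_ne_zero (ne_of_gt hc) hHne
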